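/- Let U be a 2-cuttable unrooted binary phylogenetic network. Then every blob of U has at least three incident cut-edges. -/

import Mathlib

/-- A graph with an explicit vertex set inside an ambient type `V`. -/
structure Net (V : Type) where
  verts : Set V
  graph : SimpleGraph V
  support : ∀ ⦃a b : V⦄, graph.Adj a b → a ∈ verts ∧ b ∈ verts

namespace Net

variable {V : Type}

/-- The degree of a vertex. -/
noncomputable def deg (N : Net V) (v : V) : ℕ := (N.graph.neighborSet v).ncard

/-- `N` is connected (as a graph on its vertex set `N.verts`). -/
def ConnectedOn (N : Net V) : Prop :=
  N.verts.Nonempty ∧ ∀ a ∈ N.verts, ∀ b ∈ N.verts, N.graph.Reachable a b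

/-- The set of leaves (degree-1 vertices). -/
def leaves (N : Net V) : Set V := {v | v ∈ N.verts ∧ N.deg v = 1}

/-- `N` is an unrooted binary phylogenetic network on the (label) set `X`:
it is simple (automatic for `SimpleGraph`), connected, every vertex has degree 1 or 3,
and the degree-1 vertices are exactly the elements of `X` (we identify each leaf with
its label). -/
def IsUBPN (N : Net V) (X : Set V) : Prop :=
  N.ConnectedOn ∧ (∀ v ∈ N.verts, N.deg v = 1 ∨ N.deg v = 3) ∧ N.leaves = X

/-- Deleting a set of edges. -/
def deleteEdges (N : Net V) (D : Set (Sym2 V)) : Net V where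
  verts := N.verts
  graph := N.graph.deleteEdges D
  support := fun _ _ h => N.support ((SimpleGraph.deleteEdges_adj.mp h).1)

/-- A cut-edge: an edge whose deletion disconnects the network. -/
def IsCutEdge (N : Net V) (e : Sym2 V) : Prop :=
  e ∈ N.graph.edgeSet ∧ ¬ (N.deleteEdges {e}).ConnectedOn

/-- `N` is `q`-cuttable: every cycle contains a path of at least `q` vertices
each of which is incident to a cut-edge. -/
def QCuttable (N : Net V) (q : ℕ) : Prop :=
  ∀ ⦃r : V⦄ (C : N.graph.Walk r r), C.IsCycle →
    ∃ (x y : V) (P : N.graph.Walk x y), P.IsPath ∧ q ≤ P.support.length ∧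
      (∀ v ∈ P.support, v ∈ C.support) ∧ (∀ e ∈ P.edges, e ∈ C.edges) ∧
      ∀ v ∈ P.support, ∃ e, N.IsCutEdge e ∧ v ∈ e

end Net

namespace Net

variable {V : Type}

/-- Two vertices are in the same blob iff they are joined by a walk avoiding all
cut-edges (blobs are the nontrivial components obtained after deleting all cut-edges). -/
def SameBlob (N : Net V) (a b : V) : Prop :=
  Relation.ReflTransGen (fun x y => N.graph.Adj x y ∧ ¬ N.IsCutEdge s(x, y)) a b

/-- `v` lies in a blob (a maximal subgraph without cut-edges that is not a single
vertex). -/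
def InABlob (N : Net V) (v : V) : Prop := ∃ w, w ≠ v ∧ N.SameBlob v w

end Net

namespace Net

variable {V : Type}

/-- `B` is (the vertex set of) a blob of `N`: an equivalence class of the "same blob"
relation that is not a single vertex. -/
def IsBlob (N : Net V) (B : Set V) : Prop :=
  (∃ v ∈ N.verts, B = {w | N.SameBlob v w}) ∧ ∃ a ∈ B, ∃ b ∈ B, a ≠ b

end Net

open Net

/-! ### Auxiliary lemmas -/

namespace Net

open SimpleGraph

variable {V : Type}

/-- If every edge of `G` can be replaced by a detour in `G'`, then reachability in `G`
implies reachability in `G'`. -/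
lemma reachable_detour {G G' : SimpleGraph V}
    (h : ∀ x y, G.Adj x y → G'.Reachable x y) {a b : V} (hab : G.Reachable a b) :
    G'.Reachable a b := by
  obtain ⟨w⟩ := hab
  induction w with
  | nil => exact Reachable.refl _
  | cons hadj _ ih => exact (h _ _ hadj).trans ih

/-- The graph of non-cut-edges. -/
def blobGraph (U : Net V) : SimpleGraph V where
  Adj x y := U.graph.Adj x y ∧ ¬ U.IsCutEdge s(x, y)
  symm := ⟨fun x y h => ⟨h.1.symm, by rw [Sym2.eq_swap]; exact h.2⟩⟩
  loopless := ⟨fun x h => U.graph.loopless.irrefl x h.1⟩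

lemma sameBlob_iff_reachable (U : Net V) (a b : V) :
    U.SameBlob a b ↔ U.blobGraph.Reachable a b :=
  (SimpleGraph.reachable_iff_reflTransGen (G := U.blobGraph) a b).symm

lemma SameBlob.symm2 {U : Net V} {a b : V} (h : U.SameBlob a b) : U.SameBlob b a :=
  (U.sameBlob_iff_reachable b a).mpr ((U.sameBlob_iff_reachable a b).mp h).symm

lemma SameBlob.trans2 {U : Net V} {a b c : V} (h : U.SameBlob a b) (h' : U.SameBlob b c) :
    U.SameBlob a c :=
  (U.sameBlob_iff_reachable a c).mpr
    (((U.sameBlob_iff_reachable a b).mp h).trans ((U.sameBlob_iff_reachable b c).mp h'))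

lemma not_cutEdge_of_reachable (U : Net V) (hC : U.ConnectedOn) {x y : V}
    (hr : (U.graph.deleteEdges {s(x, y)}).Reachable x y) :
    ¬ U.IsCutEdge s(x, y) := by
  rintro ⟨hmem, hnc⟩
  apply hnc
  refine ⟨hC.1, fun a ha b hb => ?_⟩
  refine reachable_detour (fun p q hpq => ?_) (hC.2 a ha b hb)
  by_cases hpq' : s(p, q) = s(x, y)
  · rcases Sym2.eq_iff.mp hpq' with ⟨rfl, rfl⟩ | ⟨rfl, rfl⟩
    · exact hr
    · exact hr.symm
  · exact SimpleGraph.Adj.reachable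
      (SimpleGraph.deleteEdges_adj.mpr ⟨hpq, fun h => hpq' (Set.mem_singleton_iff.mp h)⟩)

lemma not_cutEdge_of_mem_cycle (U : Net V) (hC : U.ConnectedOn) {r : V}
    {C : U.graph.Walk r r} (hc : C.IsCycle) {e : Sym2 V} (he : e ∈ C.edges) :
    ¬ U.IsCutEdge e := by
  induction e using Sym2.ind with
  | _ x y =>
    have h := SimpleGraph.adj_and_reachable_delete_edges_iff_exists_cycle.mpr ⟨r, C, hc, he⟩
    exact U.not_cutEdge_of_reachable hC h.2

lemma connectedOn_delete_of_not_cut (U : Net V) (hC : U.ConnectedOn) {e : Sym2 V}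
    (hmem : e ∈ U.graph.edgeSet) (hnc : ¬ U.IsCutEdge e) :
    (U.deleteEdges {e}).ConnectedOn := by
  by_contra h; exact hnc ⟨hmem, h⟩

lemma sameBlob_of_walk (U : Net V) {x y : V} (p : U.graph.Walk x y)
    (hp : ∀ e ∈ p.edges, ¬ U.IsCutEdge e) : U.SameBlob x y := by
  induction p with
  | nil => exact Relation.ReflTransGen.refl
  | cons h q ih =>
    exact Relation.ReflTransGen.head ⟨h, hp _ (by simp)⟩ (ih fun e he => hp e (by simp [he]))

lemma sameBlob_of_mem_support (U : Net V) {x y w : V} (p : U.graph.Walk x y)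
    (hp : ∀ e ∈ p.edges, ¬ U.IsCutEdge e) (hw : w ∈ p.support) : U.SameBlob x w := by
  classical
  exact U.sameBlob_of_walk (p.takeUntil w hw) fun e he => hp e (p.edges_takeUntil_subset hw he)

end Net

/-- Every blob of a `2`-cuttable unrooted binary phylogenetic network
has at least three incident cut-edges. -/
theorem twoCuttable_blob_three_cutEdges {V : Type} [Fintype V]
    (U : Net V) (X : Set V) (hU : U.IsUBPN X) (h2 : U.QCuttable 2)
    (B : Set V) (hB : U.IsBlob B) :
    3 ≤ {e : Sym2 V | U.IsCutEdge e ∧ ∃ v ∈ B, v ∈ e}.ncard := by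
  classical
  obtain ⟨⟨v0, hv0, hBeq⟩, a0, ha0, b0, hb0, hab0⟩ := hB
  obtain ⟨hConn, hdeg13, -⟩ := hU
  set S : Set (Sym2 V) := {e : Sym2 V | U.IsCutEdge e ∧ ∃ v ∈ B, v ∈ e} with hSdef
  -- basic blob facts
  have hBmem : ∀ {x : V}, x ∈ B ↔ U.SameBlob v0 x := by
    intro x; rw [hBeq]; exact Iff.rfl
  have hBsame : ∀ x ∈ B, ∀ y ∈ B, U.SameBlob x y := fun x hx y hy =>
    (hBmem.mp hx).symm2.trans2 (hBmem.mp hy)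
  have hBclosed : ∀ x ∈ B, ∀ {y : V}, U.SameBlob x y → y ∈ B := fun x hx y hxy =>
    hBmem.mpr ((hBmem.mp hx).trans2 hxy)
  have hBstep : ∀ x ∈ B, ∀ y : V, U.graph.Adj x y → ¬ U.IsCutEdge s(x, y) → y ∈ B :=
    fun x hx y hadj hnc =>
      hBclosed x hx (Relation.ReflTransGen.single ⟨hadj, hnc⟩)
  have hBverts : ∀ x ∈ B, x ∈ U.verts := by
    intro x hx
    rcases (hBmem.mp hx).cases_tail with h | ⟨c, _, hrel⟩
    · exact h ▸ hv0
    · exact (U.support hrel.1).2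
  have hBother : ∀ x ∈ B, ∃ w ∈ B, w ≠ x := by
    intro x hx
    by_cases h : x = a0
    · exact ⟨b0, hb0, by rw [h]; exact fun hc => hab0 hc.symm⟩
    · exact ⟨a0, ha0, fun hc => h hc.symm⟩
  -- a cut-edge cannot have both (distinct) endpoints in the blob
  have hnotcutBB : ∀ x ∈ B, ∀ y ∈ B, x ≠ y → U.graph.Adj x y → ¬ U.IsCutEdge s(x, y) := by
    intro x hx y hy hne hadj hcut
    have hle : U.blobGraph ≤ U.graph.deleteEdges {s(x, y)} := by
      intro p q hpq
      rw [SimpleGraph.deleteEdges_adj]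
      exact ⟨hpq.1, fun hmem => hpq.2 (Set.mem_singleton_iff.mp hmem ▸ hcut)⟩
    have hr : (U.graph.deleteEdges {s(x, y)}).Reachable x y :=
      SimpleGraph.Reachable.mono hle ((U.sameBlob_iff_reachable x y).mp (hBsame x hx y hy))
    exact U.not_cutEdge_of_reachable hConn hr hcut
  -- blob vertices have degree 3
  have hdeg3 : ∀ x ∈ B, U.deg x = 3 := by
    intro x hx
    rcases hdeg13 x (hBverts x hx) with h1 | h3
    · exfalso
      obtain ⟨yy, hyy⟩ := Set.ncard_eq_one.mp h1
      obtain ⟨w, hw, hwx⟩ := hBother x hx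
      rcases (hBsame x hx w hw).cases_head with h | ⟨c, hrel, -⟩
      · exact hwx h.symm
      · obtain ⟨hadj, hnc⟩ := hrel
        have hcy : c = yy := by
          have : c ∈ U.graph.neighborSet x := hadj
          rw [hyy] at this; exact this
        subst hcy
        have hco := U.connectedOn_delete_of_not_cut hConn hadj hnc
        have hre := hco.2 x (hBverts x hx) w (hBverts w hw)
        obtain ⟨p⟩ := hre
        cases p with
        | nil => exact hwx rfl
        | cons hadj' q =>
          obtain ⟨hadj'', hne'⟩ := SimpleGraph.deleteEdges_adj.mp hadj'
          apply hne'
          have : _ ∈ U.graph.neighborSet x := hadj''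
          rw [hyy] at this
          rw [this]
          exact rfl
    · exact h3
  -- build a cycle inside the blob
  obtain ⟨c1, hrel1, -⟩ : ∃ c, (U.graph.Adj a0 c ∧ ¬ U.IsCutEdge s(a0, c)) ∧
      Relation.ReflTransGen _ c b0 := by
    rcases (hBsame a0 ha0 b0 hb0).cases_head with h | h
    · exact absurd h hab0
    · exact h
  obtain ⟨hadj1, hnc1⟩ := hrel1
  have hc1B : c1 ∈ B := hBstep a0 ha0 c1 hadj1 hnc1
  have hco1 := U.connectedOn_delete_of_not_cut hConn hadj1 hnc1
  have hre1 : (U.graph \ SimpleGraph.fromEdgeSet {s(a0, c1)}).Reachable a0 c1 :=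
    hco1.2 a0 (hBverts a0 ha0) c1 (hBverts c1 hc1B)
  obtain ⟨p1, hp1⟩ := SimpleGraph.reachable_delete_edges_iff_exists_walk.mp hre1
  have hnotin1 : s(c1, a0) ∉ (p1.toPath : U.graph.Walk a0 c1).edges := by
    intro h
    rw [Sym2.eq_swap] at h
    exact hp1 (p1.edges_toPath_subset h)
  have hcyc1 : (SimpleGraph.Walk.cons hadj1.symm ↑p1.toPath).IsCycle :=
    SimpleGraph.Path.cons_isCycle p1.toPath hadj1.symm hnotin1
  set C1 : U.graph.Walk c1 c1 := SimpleGraph.Walk.cons hadj1.symm ↑p1.toPath with hC1def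
  -- all vertices of a cycle rooted in the blob lie in the blob
  have hcycB : ∀ (r : V), r ∈ B → ∀ (C : U.graph.Walk r r), C.IsCycle →
      ∀ w ∈ C.support, w ∈ B := by
    intro r hr C hc w hw
    exact hBclosed r hr
      (U.sameBlob_of_mem_support C (fun e he => U.not_cutEdge_of_mem_cycle hConn hc he) hw)
  -- from 2-cuttability: two distinct blob vertices incident to cut-edges
  have hmain : ∀ (r : V), r ∈ B → ∀ (C : U.graph.Walk r r), C.IsCycle →
      ∃ x y : V, x ∈ B ∧ y ∈ B ∧ x ≠ y ∧ x ∈ C.support ∧ y ∈ C.support ∧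
        s(x, y) ∈ C.edges ∧
        (∃ e, U.IsCutEdge e ∧ x ∈ e) ∧ (∃ e, U.IsCutEdge e ∧ y ∈ e) := by
    intro r hr C hc
    obtain ⟨x, y, P, hPpath, hlen, hsup, hedg, hcut⟩ := h2 C hc
    have hlen1 : 1 ≤ P.length := by
      have := P.length_support
      omega
    obtain ⟨a1, b1, hab⟩ : ∃ a1 b1, s(a1, b1) ∈ P.edges := by
      have : P.edges ≠ [] := by
        intro h
        have := P.length_edges
        rw [h] at this
        simp at this
        omega
      obtain ⟨f, hf⟩ := List.exists_mem_of_ne_nil _ this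
      induction f using Sym2.ind with
      | _ a1 b1 => exact ⟨a1, b1, hf⟩
    have ha1s : a1 ∈ P.support := P.fst_mem_support_of_mem_edges hab
    have hb1s : b1 ∈ P.support := P.snd_mem_support_of_mem_edges hab
    have hne : a1 ≠ b1 := (U.graph.mem_edgeSet.mp (P.edges_subset_edgeSet hab)).ne
    exact ⟨a1, b1,
      hcycB r hr C hc a1 (hsup a1 ha1s),
      hcycB r hr C hc b1 (hsup b1 hb1s),
      hne, hsup a1 ha1s, hsup b1 hb1s, hedg _ hab, hcut a1 ha1s, hcut b1 hb1s⟩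
  
  -- two distinct blob vertices incident to cut-edges
  obtain ⟨u, v, huB, hvB, huv_ne, -, -, -, ⟨eu, heu, hueu⟩, ⟨ev, hev, hvev⟩⟩ :=
    hmain c1 hc1B C1 hcyc1
  -- structure of a cut-edge incident to the blob
  have hother : ∀ (e : Sym2 V), U.IsCutEdge e → ∀ x ∈ B, x ∈ e →
      ∃ y, e = s(x, y) ∧ y ∉ B ∧ U.graph.Adj x y := by
    intro e he x hxB hxe
    obtain ⟨y, rfl⟩ := Sym2.mem_iff_exists.mp hxe
    have hadj : U.graph.Adj x y := U.graph.mem_edgeSet.mp he.1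
    exact ⟨y, rfl, fun hyB => hnotcutBB x hxB y hyB hadj.ne hadj he, hadj⟩
  have honly : ∀ (e : Sym2 V), U.IsCutEdge e → ∀ x ∈ B, x ∈ e → ∀ w ∈ B, w ∈ e → w = x := by
    intro e he x hxB hxe w hwB hwe
    obtain ⟨y, rfl, hyB, hadj⟩ := hother e he x hxB hxe
    rcases Sym2.mem_iff.mp hwe with h | h
    · exact h
    · exact absurd (h ▸ hwB) hyB
  obtain ⟨u', heu', hu'B, hadjuu'⟩ := hother eu heu u huB hueu
  obtain ⟨v', hev', hv'B, hadjvv'⟩ := hother ev hev v hvB hvev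
  have heuev : eu ≠ ev := by
    intro h
    exact huv_ne (honly ev hev v hvB hvev u huB (h ▸ hueu))
  -- suppose there are at most two incident cut-edges
  by_contra hlt
  push_neg at hlt
  have hSle : S.ncard ≤ 2 := by omega
  have hpairS : {eu, ev} ⊆ S := by
    intro e he
    simp only [Set.mem_insert_iff, Set.mem_singleton_iff] at he
    rcases he with rfl | rfl
    · exact ⟨heu, u, huB, hueu⟩
    · exact ⟨hev, v, hvB, hvev⟩
  have hSeq : ({eu, ev} : Set (Sym2 V)) = S :=
    Set.eq_of_subset_of_ncard_le hpairS (by rw [Set.ncard_pair heuev]; exact hSle) (S.toFinite)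
  -- every blob vertex incident to a cut-edge is u or v
  have honlyS : ∀ (w : V), w ∈ B → (∃ e, U.IsCutEdge e ∧ w ∈ e) → w = u ∨ w = v := by
    rintro w hwB ⟨e, he, hwe⟩
    have heS : e ∈ S := ⟨he, w, hwB, hwe⟩
    rw [← hSeq] at heS
    simp only [Set.mem_insert_iff, Set.mem_singleton_iff] at heS
    rcases heS with h | h
    · exact Or.inl (honly e he u huB (h ▸ hueu) w hwB hwe)
    · exact Or.inr (honly e he v hvB (h ▸ hvev) w hwB hwe)
  -- every cycle rooted in the blob contains the edge s(u, v)
  have hcycuv : ∀ (r : V), r ∈ B → ∀ (C : U.graph.Walk r r), C.IsCycle →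
      s(u, v) ∈ C.edges := by
    intro r hr C hc
    obtain ⟨x, y, hxB, hyB, hxy, hxs, hys, hsC, hcx, hcy⟩ := hmain r hr C hc
    rcases honlyS x hxB hcx with rfl | rfl <;> rcases honlyS y hyB hcy with rfl | rfl
    · exact absurd rfl hxy
    · exact hsC
    · rw [Sym2.eq_swap]; exact hsC
    · exact absurd rfl hxy
  have hadjuv : U.graph.Adj u v := by
    have h := hcycuv c1 hc1B C1 hcyc1
    exact U.graph.mem_edgeSet.mp (C1.edges_subset_edgeSet h)
  have hncuv : ¬ U.IsCutEdge s(u, v) := hnotcutBB u huB v hvB huv_ne hadjuv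
  -- the graph of non-cut-edges different from s(u, v)
  set Gmin : SimpleGraph V :=
    { Adj := fun x y => U.graph.Adj x y ∧ ¬ U.IsCutEdge s(x, y) ∧ s(x, y) ≠ s(u, v)
      symm := ⟨fun x y h => ⟨h.1.symm, by rw [Sym2.eq_swap]; exact h.2.1,
        by rw [Sym2.eq_swap]; exact h.2.2⟩⟩
      loopless := ⟨fun x h => U.graph.loopless.irrefl x h.1⟩ } with hGmin
  have huvmin : Gmin.Reachable u v := by
    have hco := U.connectedOn_delete_of_not_cut hConn (U.graph.mem_edgeSet.mpr hadjuv) hncuv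
    have hre : (U.graph \ SimpleGraph.fromEdgeSet {s(u, v)}).Reachable u v :=
      hco.2 u (hBverts u huB) v (hBverts v hvB)
    obtain ⟨p, hp⟩ := SimpleGraph.reachable_delete_edges_iff_exists_walk.mp hre
    have hnotin : s(v, u) ∉ (p.toPath : U.graph.Walk u v).edges := by
      intro h; rw [Sym2.eq_swap] at h; exact hp (p.edges_toPath_subset h)
    have hcyc2 : (SimpleGraph.Walk.cons hadjuv.symm ↑p.toPath).IsCycle :=
      SimpleGraph.Path.cons_isCycle p.toPath hadjuv.symm hnotin
    refine ⟨(p.toPath : U.graph.Walk u v).transfer Gmin ?_⟩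
    intro e he
    have hnc : ¬ U.IsCutEdge e :=
      U.not_cutEdge_of_mem_cycle hConn hcyc2 (by simp [he])
    have hne : e ≠ s(u, v) := fun h => hp (h ▸ p.edges_toPath_subset he)
    have hmemE : e ∈ U.graph.edgeSet := (p.toPath : U.graph.Walk u v).edges_subset_edgeSet he
    revert hnc hne hmemE
    induction e using Sym2.ind with
    | _ a b =>
      intro hnc hne hmemE
      exact Gmin.mem_edgeSet.mpr ⟨U.graph.mem_edgeSet.mp hmemE, hnc, hne⟩
  -- blob vertices are connected in Gmin
  have hminreach : ∀ x ∈ B, ∀ y ∈ B, Gmin.Reachable x y := by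
    intro x hx y hy
    refine Net.reachable_detour (G := U.blobGraph) (fun p q hpq => ?_)
      ((U.sameBlob_iff_reachable x y).mp (hBsame x hx y hy))
    by_cases heq : s(p, q) = s(u, v)
    · rcases Sym2.eq_iff.mp heq with ⟨rfl, rfl⟩ | ⟨rfl, rfl⟩
      · exact huvmin
      · exact huvmin.symm
    · exact SimpleGraph.Adj.reachable ⟨hpq.1, hpq.2, heq⟩
  -- pass to the subtype graph on the blob
  haveI : Fintype ↥B := Fintype.ofFinite _
  set Gb : SimpleGraph ↥B := SimpleGraph.comap (Subtype.val) U.graph with hGb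
  haveI : DecidableRel Gb.Adj := fun a b => Classical.dec _
  have hub_ne_vb : (⟨u, huB⟩ : ↥B) ≠ ⟨v, hvB⟩ := fun h => huv_ne (congrArg Subtype.val h)
  set H : SimpleGraph ↥B := Gb.deleteEdges {s(⟨u, huB⟩, ⟨v, hvB⟩)} with hH
  haveI : DecidableRel H.Adj := fun a b => Classical.dec _
  -- lift Gmin-walks to H
  have hlift : ∀ {x y : V} (p : Gmin.Walk x y) (hx : x ∈ B),
      ∃ hy : y ∈ B, H.Reachable ⟨x, hx⟩ ⟨y, hy⟩ := by
    intro x y p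
    induction p with
    | nil => intro hx; exact ⟨hx, SimpleGraph.Reachable.refl _⟩
    | @cons x c y h q ih =>
      intro hx
      obtain ⟨hadj, hnc, hne⟩ := h
      have hcB : c ∈ B := hBstep x hx c hadj hnc
      obtain ⟨hy, hr⟩ := ih hcB
      refine ⟨hy, (SimpleGraph.Adj.reachable ?_).trans hr⟩
      rw [hH, SimpleGraph.deleteEdges_adj]
      refine ⟨hadj, fun hmem => hne ?_⟩
      have h2' := Set.mem_singleton_iff.mp hmem
      have h3' := congrArg (Sym2.map (Subtype.val : ↥B → V)) h2'
      simpa [Sym2.map_pair_eq] using h3'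
  -- H is connected
  haveI : Nonempty ↥B := ⟨⟨u, huB⟩⟩
  have hHconn : H.Connected := by
    refine ⟨fun a b => ?_⟩
    obtain ⟨w⟩ := hminreach ↑a a.2 ↑b b.2
    obtain ⟨hy, hr⟩ := hlift w a.2
    have hb2 : (⟨(b : V), hy⟩ : ↥B) = b := Subtype.ext rfl
    rw [← hb2]
    exact hr
  -- H is acyclic
  have hHac : H.IsAcyclic := by
    intro r c hc
    let fHG : H →g U.graph :=
      ⟨Subtype.val, fun {a b} h => (SimpleGraph.deleteEdges_adj.mp h).1⟩
    have hinj : Function.Injective fHG := Subtype.val_injective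
    have hc' : ((c.map fHG).IsCycle) :=
      (SimpleGraph.Walk.map_isCycle_iff_of_injective hinj).mpr hc
    have hmem := hcycuv ↑r r.2 (c.map fHG) hc'
    rw [SimpleGraph.Walk.edges_map] at hmem
    obtain ⟨f, hf, hfe⟩ := List.mem_map.mp hmem
    have key : ∀ (f : Sym2 ↥B), Sym2.map fHG f = s(u, v) → f = s(⟨u, huB⟩, ⟨v, hvB⟩) := by
      intro f
      induction f using Sym2.ind with
      | _ c0 d0 =>
        intro h
        rw [Sym2.map_pair_eq] at h
        rcases Sym2.eq_iff.mp h with ⟨h1, h2⟩ | ⟨h1, h2⟩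
        · rw [show c0 = ⟨u, huB⟩ from Subtype.ext h1, show d0 = ⟨v, hvB⟩ from Subtype.ext h2]
        · rw [show c0 = ⟨v, hvB⟩ from Subtype.ext h1, show d0 = ⟨u, huB⟩ from Subtype.ext h2]
          exact Sym2.eq_swap
    have hfin : s(⟨u, huB⟩, ⟨v, hvB⟩) ∈ c.edges := key f hfe ▸ hf
    have hfin2 := c.edges_subset_edgeSet hfin
    rw [hH, SimpleGraph.edgeSet_deleteEdges] at hfin2
    exact hfin2.2 rfl
  -- degrees in Gb
  have hdegGb : ∀ x : ↥B, Gb.degree x = (U.graph.neighborSet ↑x ∩ B).ncard := by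
    intro x
    have himg : Subtype.val '' (Gb.neighborSet x) = U.graph.neighborSet ↑x ∩ B := by
      ext w
      constructor
      · rintro ⟨⟨w', hw'⟩, hadj, rfl⟩
        exact ⟨hadj, hw'⟩
      · rintro ⟨hadj, hw⟩
        exact ⟨⟨w, hw⟩, hadj, rfl⟩
    rw [← himg, Set.ncard_image_of_injective _ Subtype.val_injective,
      Set.ncard_eq_toFinset_card', Set.toFinset_card]
    exact (SimpleGraph.card_neighborSet_eq_degree Gb x).symm
  have hndeg : ∀ x : ↥B, (x : V) ≠ u → (x : V) ≠ v → Gb.degree x = 3 := by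
    intro x hxu hxv
    rw [hdegGb]
    have hsub : U.graph.neighborSet ↑x ∩ B = U.graph.neighborSet ↑x := by
      refine Set.inter_eq_left.mpr ?_
      intro y hy
      by_cases hcut : U.IsCutEdge s(↑x, y)
      · rcases honlyS ↑x x.2 ⟨_, hcut, Sym2.mem_mk_left _ _⟩ with h | h
        · exact absurd h hxu
        · exact absurd h hxv
      · exact hBstep ↑x x.2 y hy hcut
    rw [hsub]
    exact hdeg3 ↑x x.2
  have hdeg2 : ∀ (w w' : V) (hwB : w ∈ B), U.IsCutEdge s(w, w') → w' ∉ B →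
      U.graph.Adj w w' →
      (∀ y, U.IsCutEdge s(w, y) → y = w') →
      Gb.degree ⟨w, hwB⟩ = 2 := by
    intro w w' hwB hcut hw'B hadj huniq
    rw [hdegGb]
    have hinter : U.graph.neighborSet w ∩ B = U.graph.neighborSet w \ {w'} := by
      ext y
      constructor
      · rintro ⟨hadjy, hyB⟩
        exact ⟨hadjy, fun h => hw'B (Set.mem_singleton_iff.mp h ▸ hyB)⟩
      · rintro ⟨hadjy, hyw'⟩
        refine ⟨hadjy, ?_⟩
        by_cases hcuty : U.IsCutEdge s(w, y)
        · exact absurd (huniq y hcuty) hyw'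
        · exact hBstep w hwB y hadjy hcuty
    have hmemN : w' ∈ U.graph.neighborSet w := (SimpleGraph.mem_neighborSet _ _ _).mpr hadj
    rw [hinter, Set.ncard_diff_singleton_of_mem hmemN,
      show (U.graph.neighborSet w).ncard = 3 from hdeg3 w hwB]
  have huniqu : ∀ y, U.IsCutEdge s(u, y) → y = u' := by
    intro y hcuty
    have heS : s(u, y) ∈ S := ⟨hcuty, u, huB, Sym2.mem_mk_left _ _⟩
    rw [← hSeq] at heS
    simp only [Set.mem_insert_iff, Set.mem_singleton_iff] at heS
    rcases heS with h | h
    · rw [heu'] at h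
      exact Sym2.congr_right.mp h
    · exact absurd (honly ev hev v hvB hvev u huB (h ▸ Sym2.mem_mk_left u y)) huv_ne
  have huniqv : ∀ y, U.IsCutEdge s(v, y) → y = v' := by
    intro y hcuty
    have heS : s(v, y) ∈ S := ⟨hcuty, v, hvB, Sym2.mem_mk_left _ _⟩
    rw [← hSeq] at heS
    simp only [Set.mem_insert_iff, Set.mem_singleton_iff] at heS
    rcases heS with h | h
    · exact absurd (honly eu heu u huB hueu v hvB (h ▸ Sym2.mem_mk_left v y)).symm huv_ne
    · rw [hev'] at h
      exact Sym2.congr_right.mp h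
  have hcutu : U.IsCutEdge s(u, u') := heu' ▸ heu
  have hcutv : U.IsCutEdge s(v, v') := hev' ▸ hev
  have hdegub : Gb.degree ⟨u, huB⟩ = 2 := hdeg2 u u' huB hcutu hu'B hadjuu' huniqu
  have hdegvb : Gb.degree ⟨v, hvB⟩ = 2 := hdeg2 v v' hvB hcutv hv'B hadjvv' huniqv
  -- handshake
  have hsum := Gb.sum_degrees_eq_twice_card_edges
  have hpt : ∀ x : ↥B,
      Gb.degree x + (if x ∈ ({⟨u, huB⟩, ⟨v, hvB⟩} : Finset ↥B) then 1 else 0) = 3 := by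
    intro x
    by_cases hx : x ∈ ({⟨u, huB⟩, ⟨v, hvB⟩} : Finset ↥B)
    · rw [if_pos hx]
      rcases Finset.mem_insert.mp hx with rfl | hx'
      · rw [hdegub]
      · rw [Finset.mem_singleton.mp hx', hdegvb]
    · rw [if_neg hx]
      rw [Finset.mem_insert, Finset.mem_singleton] at hx
      push_neg at hx
      rw [hndeg x (fun h => hx.1 (Subtype.ext h)) (fun h => hx.2 (Subtype.ext h))]
  have hite : (∑ x : ↥B, if x ∈ ({⟨u, huB⟩, ⟨v, hvB⟩} : Finset ↥B) then 1 else 0) = 2 := by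
    rw [Finset.sum_ite_mem, Finset.univ_inter, Finset.sum_const,
      Finset.card_pair hub_ne_vb]
    simp
  have htot : 2 * Gb.edgeFinset.card + 2 = 3 * Fintype.card ↥B := by
    have h := Finset.sum_congr rfl (fun x (_ : x ∈ Finset.univ) => hpt x)
    rw [Finset.sum_add_distrib, hsum, hite, Finset.sum_const, Finset.card_univ,
      smul_eq_mul, Nat.mul_comm (Fintype.card ↥B) 3] at h
    exact h
  -- H is a tree
  have hTree : H.IsTree := ⟨hHconn, hHac⟩
  have hcardH := hTree.card_edgeFinset
  have hEH : H.edgeFinset = Gb.edgeFinset.erase s(⟨u, huB⟩, ⟨v, hvB⟩) := by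
    ext e
    simp only [SimpleGraph.mem_edgeFinset, Finset.mem_erase, hH,
      SimpleGraph.edgeSet_deleteEdges, Set.mem_diff, Set.mem_singleton_iff]
    tauto
  have hmemGbE : s(⟨u, huB⟩, ⟨v, hvB⟩) ∈ Gb.edgeFinset :=
    SimpleGraph.mem_edgeFinset.mpr (Gb.mem_edgeSet.mpr hadjuv)
  have hpos : 1 ≤ Gb.edgeFinset.card := Finset.card_pos.mpr ⟨_, hmemGbE⟩
  have hcards : Gb.edgeFinset.card = H.edgeFinset.card + 1 := by
    rw [hEH, Finset.card_erase_of_mem hmemGbE]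
    omega
  have hn1 : 1 ≤ Fintype.card ↥B := Fintype.card_pos
  have hdeglt := Gb.degree_lt_card_verts ⟨u, huB⟩
  rw [hdegub] at hdeglt
  omega
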